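/- If the Laurent polynomials g₁,...,g_r are linearly independent in C[u,u^{-1}] and φ(g_j) < 1 for all j, then the classes of g₁,...,g_r in C[u,u^{-1}]/(∂_{u₁}f,...,∂_{uₙ}f) are linearly independent. -/

import Mathlib

open scoped BigOperators
set_option maxHeartbeats 1000000
set_option synthInstance.maxHeartbeats 400000

noncomputable section

/-- Laurent polynomials `ℂ[u₁,…,uₙ,u₁⁻¹,…,uₙ⁻¹]`. -/
abbrev LaurentK (n : ℕ) := AddMonoidAlgebra ℂ (Fin n → ℤ)
/-- The parameter ring `ℂ[x₁,…,x_r]`. -/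
abbrev CoeffR (r : ℕ) := MvPolynomial (Fin r) ℂ
/-- Laurent polynomials in `u` with coefficients in `ℂ[x]`. -/
abbrev LaurentKX (n r : ℕ) := AddMonoidAlgebra (CoeffR r) (Fin n → ℤ)

/-- Newton filtration value of a Laurent polynomial, given the finite set `S` of
supporting linear forms of the Newton boundary (the parameters `x` have weight 0). -/
def newtonPhi {R : Type} [CommRing R] {n : ℕ}
    (S : Finset ((Fin n → ℤ) →+ ℚ)) (g : AddMonoidAlgebra R (Fin n → ℤ)) : WithBot ℚ :=
  g.coeff.support.sup fun a => S.sup fun L => ((L a : ℚ) : WithBot ℚ)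

/-- The logarithmic derivative `u_i ∂/∂u_i`. -/
def thetaDeriv {R : Type} [CommRing R] {n : ℕ} (i : Fin n)
    (g : AddMonoidAlgebra R (Fin n → ℤ)) : AddMonoidAlgebra R (Fin n → ℤ) :=
  Finsupp.sum g.coeff fun a c => (AddMonoidAlgebra.single a ((a i) • c) : AddMonoidAlgebra R (Fin n → ℤ))

def inclK {n r : ℕ} (g : LaurentK n) : LaurentKX n r :=
  AddMonoidAlgebra.ofCoeff (Finsupp.mapRange (algebraMap ℂ (CoeffR r)) (map_zero _) g.coeff)

/-- `F(u,x) = f(u) + ∑ x_j g_j(u)`. -/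
def defF {n r : ℕ} (f : LaurentK n) (g : Fin r → LaurentK n) : LaurentKX n r :=
  inclK f + ∑ j, (AddMonoidAlgebra.single 0 (MvPolynomial.X j) : LaurentKX n r) * inclK (g j)

def evalT {n : ℕ} (u : Fin n → ℂˣ) (g : LaurentK n) : ℂ :=
  Finsupp.sum g.coeff fun a c => c * ∏ i, ((u i : ℂ) ^ (a i))

open Classical in
/-- Face part of `f` associated to a linear form `ℓ`. -/
def facePart {n : ℕ} (f : LaurentK n) (ℓ : (Fin n → ℤ) →+ ℚ) : LaurentK n :=
  AddMonoidAlgebra.ofCoeff (Finsupp.filter (fun a => ∀ b ∈ f.coeff.support, ℓ b ≤ ℓ a) f.coeff)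

/-- Kouchnirenko nondegeneracy w.r.t. the Newton polyhedron at infinity. -/
def Nondegenerate {n : ℕ} (f : LaurentK n) : Prop :=
  ∀ ℓ : (Fin n → ℤ) →+ ℚ, ℓ ≠ 0 → ∀ u : Fin n → ℂˣ,
    ∃ i, evalT u (thetaDeriv i (facePart f ℓ)) ≠ 0

def expR {n : ℕ} (a : Fin n → ℤ) : Fin n → ℝ := fun i => (a i : ℝ)

/-- `f` is convenient ("commode"): the origin lies in the interior of its Newton polyhedron. -/
def Convenient {n : ℕ} (f : LaurentK n) : Prop :=
  (0 : Fin n → ℝ) ∈ interior (convexHull ℝ (expR '' (f.coeff.support : Set (Fin n → ℤ))))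

def jacobianIdeal {n : ℕ} (f : LaurentK n) : Ideal (LaurentK n) :=
  Ideal.span (Set.range fun i => thetaDeriv i f)

/-- The global Milnor number `μ = dim_ℂ Ωⁿ(U)/df∧Ω^{n-1}(U)`. -/
def milnor {n : ℕ} (f : LaurentK n) : ℕ :=
  Module.finrank ℂ (LaurentK n ⧸ jacobianIdeal f)

/-- `S` consists of the supporting linear forms of the Newton polyhedron of `f`:
the sublevel set `{φ ≤ 1}` is exactly the Newton polyhedron. -/
def SCompatible {n : ℕ} (S : Finset ((Fin n → ℤ) →+ ℚ)) (f : LaurentK n) : Prop :=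
  ∀ g : LaurentK n, newtonPhi S g ≤ (1 : ℚ) ↔
    ∀ a ∈ g.coeff.support, expR a ∈ convexHull ℝ (expR '' (f.coeff.support : Set (Fin n → ℤ)))

/-- if the Laurent polynomials `g₁,…,g_r` are linearly independent in
`ℂ[u,u⁻¹]` and `φ(g_j) < 1` for all `j`, then their classes in
`ℂ[u,u⁻¹]/(∂_{u₁}f,…,∂_{uₙ}f)` are linearly independent.
(`hdiv` is the relevant consequence of Kouchnirenko's division theorem: an element of the
Jacobian ideal of weight `β` can be divided with quotients of weight `≤ β − 1`;
`hpos` encodes that `N_γ K = 0` for `γ < 0`.) -/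
theorem classes_linearIndependent {n r : ℕ}
    (S : Finset ((Fin n → ℤ) →+ ℚ)) (hS : S.Nonempty)
    (f : LaurentK n) (g : Fin r → LaurentK n)
    (hSf : SCompatible S f) (hconv : Convenient f) (hnd : Nondegenerate f)
    (hpos : ∀ a : Fin n → ℤ, ∃ L ∈ S, (0:ℚ) ≤ L a)
    (hdiv : ∀ h ∈ jacobianIdeal f, ∀ β : ℚ, newtonPhi S h ≤ (β : WithBot ℚ) →
      ∃ b : Fin n → LaurentK n, h = ∑ i, b i * thetaDeriv i f ∧
        ∀ i, newtonPhi S (b i) ≤ ((β - 1 : ℚ) : WithBot ℚ))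
    (hgind : LinearIndependent ℂ g)
    (hg : ∀ j, newtonPhi S (g j) < ((1 : ℚ) : WithBot ℚ)) :
    LinearIndependent ℂ
      (fun j : Fin r => Ideal.Quotient.mk (jacobianIdeal f) (g j)) := by
  rw [Fintype.linearIndependent_iff]
  intro c hc
  set I := jacobianIdeal f with hI
  set h : LaurentK n := ∑ j, c j • g j with hh
  have hmk : Ideal.Quotient.mk I h = 0 := by
    have h1 : Ideal.Quotient.mk I h = Ideal.Quotient.mkₐ ℂ I h := rfl
    rw [h1, hh, map_sum]
    simp only [map_smul, Ideal.Quotient.mkₐ_eq_mk]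
    exact hc
  have hmem : h ∈ I := (Ideal.Quotient.eq_zero_iff_mem).mp hmk
  -- φ(h) < 1
  have hφ : newtonPhi S h < ((1:ℚ) : WithBot ℚ) := by
    unfold newtonPhi
    rw [Finset.sup_lt_iff (WithBot.bot_lt_coe 1)]
    intro a ha
    have hsub : h.coeff.support ⊆ Finset.univ.biUnion fun j => (c j • g j).coeff.support := by
      rw [hh, AddMonoidAlgebra.coeff_sum]; exact Finsupp.support_finset_sum
    obtain ⟨j, _, haj⟩ := Finset.mem_biUnion.mp (hsub ha)
    have haj' : a ∈ (g j).coeff.support := Finsupp.support_smul haj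
    refine lt_of_le_of_lt ?_ (hg j)
    exact Finset.le_sup (f := fun a => S.sup fun L => ((L a : ℚ) : WithBot ℚ)) haj'
  obtain ⟨β, hβ1, hβle⟩ : ∃ β : ℚ, β < 1 ∧ newtonPhi S h ≤ (β : WithBot ℚ) := by
    cases hcase : newtonPhi S h with
    | bot => exact ⟨0, by norm_num, by simp⟩
    | coe q =>
        refine ⟨q, ?_, le_rfl⟩
        rw [hcase] at hφ
        exact_mod_cast hφ
  obtain ⟨b, hbeq, hbφ⟩ := hdiv h hmem β hβle
  have hb0 : ∀ i, b i = 0 := by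
    intro i
    by_contra hne
    obtain ⟨a, ha⟩ := Finsupp.support_nonempty_iff.mpr (mt AddMonoidAlgebra.coeff_eq_zero.mp hne)
    obtain ⟨L, hLS, hL0⟩ := hpos a
    have h1 : ((L a : ℚ) : WithBot ℚ) ≤ newtonPhi S (b i) :=
      le_trans (Finset.le_sup (f := fun L => ((L a : ℚ) : WithBot ℚ)) hLS)
        (Finset.le_sup (f := fun a => S.sup fun L => ((L a : ℚ) : WithBot ℚ)) ha)
    have h2 : ((0:ℚ) : WithBot ℚ) ≤ ((β - 1 : ℚ) : WithBot ℚ) := by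
      refine le_trans ?_ (le_trans h1 (hbφ i))
      exact_mod_cast hL0
    rw [WithBot.coe_le_coe] at h2
    linarith
  have hzero : h = 0 := by
    rw [hbeq]
    simp [hb0]
  exact fun j => Fintype.linearIndependent_iff.mp hgind c (by rw [← hh]; exact hzero) j

end
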